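/- Let G = H × K be a direct product of finite groups H and K having no common direct factors. Then Aut(G) is isomorphic to the group of formal 2×2 matrices [[a, c],[b, d]] with a ∈ Aut(H), d ∈ Aut(K), b ∈ Hom(K, Z(H)), c ∈ Hom(H, Z(K)), acting naturally on H × K, with multiplication given by matrix composition. -/

import Mathlib

namespace BCM

variable {A : Type*} [Group A]

def fpow (f : A →* A) : ℕ → (A →* A)
  | 0 => MonoidHom.id A
  | n+1 => (fpow f n).comp f

lemma fpow_succ (f : A →* A) (n : ℕ) (x : A) : fpow f (n+1) x = fpow f n (f x) := rfl

lemma fpow_succ' (f : A →* A) (n : ℕ) (x : A) : fpow f (n+1) x = f (fpow f n x) := by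
  induction n generalizing x with
  | zero => rfl
  | succ n ih => rw [fpow_succ, ih, fpow_succ]

lemma fpow_add (f : A →* A) (m n : ℕ) (x : A) : fpow f (m + n) x = fpow f m (fpow f n x) := by
  induction n generalizing x with
  | zero => rfl
  | succ n ih => rw [show m + (n+1) = (m+n)+1 from rfl, fpow_succ, fpow_succ, ih]

lemma fpow_norm {f : A →* A} (hf : ∀ a x, f (a * x * a⁻¹) = a * f x * a⁻¹) (n : ℕ) :
    ∀ a x, fpow f n (a * x * a⁻¹) = a * fpow f n x * a⁻¹ := by
  induction n with
  | zero => intro a x; rfl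
  | succ n ih => intro a x; rw [fpow_succ, hf, ih, fpow_succ]

lemma range_succ_le (f : A →* A) (n : ℕ) : (fpow f (n+1)).range ≤ (fpow f n).range := by
  rintro y ⟨x, rfl⟩; exact ⟨f x, rfl⟩

lemma range_antitone (f : A →* A) {m n : ℕ} (h : m ≤ n) :
    (fpow f n).range ≤ (fpow f m).range := by
  induction n, h using Nat.le_induction with
  | base => exact le_rfl
  | succ n hmn ih => exact le_trans (range_succ_le f n) ih

lemma ker_succ_ge (f : A →* A) (n : ℕ) : (fpow f n).ker ≤ (fpow f (n+1)).ker := by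
  intro x hx
  rw [MonoidHom.mem_ker] at hx ⊢
  rw [fpow_succ', hx, map_one]

lemma ker_mono (f : A →* A) {m n : ℕ} (h : m ≤ n) : (fpow f m).ker ≤ (fpow f n).ker := by
  induction n, h using Nat.le_induction with
  | base => exact le_rfl
  | succ n hmn ih => exact le_trans ih (ker_succ_ge f n)

lemma range_step (f : A →* A) {k : ℕ}
    (h : (fpow f (k+1)).range = (fpow f k).range) :
    (fpow f (k+2)).range = (fpow f (k+1)).range := by
  refine le_antisymm (range_succ_le f (k+1)) ?_
  rintro y ⟨x, rfl⟩
  have hx : fpow f k x ∈ (fpow f (k+1)).range := by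
    rw [h]; exact ⟨x, rfl⟩
  obtain ⟨z, hz⟩ := hx
  refine ⟨z, ?_⟩
  rw [fpow_succ' f (k+1), hz, ← fpow_succ']

lemma ker_step (f : A →* A) {k : ℕ}
    (h : (fpow f (k+1)).ker = (fpow f k).ker) :
    (fpow f (k+2)).ker = (fpow f (k+1)).ker := by
  refine le_antisymm ?_ (ker_succ_ge f (k+1))
  intro x hx
  rw [MonoidHom.mem_ker] at hx ⊢
  have h1 : f x ∈ (fpow f (k+1)).ker := by
    rw [MonoidHom.mem_ker]; exact hx
  rw [h, MonoidHom.mem_ker] at h1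
  rw [fpow_succ]; exact h1

lemma exists_stab [Finite A] (f : A →* A) :
    ∃ n, 0 < n ∧ ∀ m, n ≤ m →
      (fpow f m).range = (fpow f n).range ∧ (fpow f m).ker = (fpow f n).ker := by
  have : Finite (Subgroup A) := by
    exact Finite.of_injective (fun S : Subgroup A => (S : Set A)) SetLike.coe_injective
  obtain ⟨i, j, hij, heq⟩ := Finite.exists_ne_map_eq_of_infinite
      (fun n : ℕ => ((fpow f n).range, (fpow f n).ker))
  rcases Prod.mk.injEq _ _ _ _ ▸ heq with ⟨hr0, hk0⟩
  clear heq
  suffices aux : ∀ i j : ℕ, i < j → (fpow f i).range = (fpow f j).range →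
      (fpow f i).ker = (fpow f j).ker → ∃ n, 0 < n ∧ ∀ m, n ≤ m →
      (fpow f m).range = (fpow f n).range ∧ (fpow f m).ker = (fpow f n).ker by
    rcases lt_or_gt_of_ne hij with hlt | hlt
    · exact aux i j hlt hr0 hk0
    · exact aux j i hlt hr0.symm hk0.symm
  clear hr0 hk0 hij i j
  intro i j hlt hr0 hk0
  have hij1 : i + 1 ≤ j := hlt
  have hr1 : (fpow f (i+1)).range = (fpow f i).range :=
    le_antisymm (range_succ_le f i) (hr0 ▸ range_antitone f hij1)
  have hk1 : (fpow f (i+1)).ker = (fpow f i).ker :=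
    le_antisymm (hk0.symm ▸ ker_mono f hij1) (ker_succ_ge f i)
  have hrall : ∀ k, i ≤ k → (fpow f (k+1)).range = (fpow f k).range := by
    intro k hk
    induction k, hk using Nat.le_induction with
    | base => exact hr1
    | succ k hk ih => exact range_step f ih
  have hkall : ∀ k, i ≤ k → (fpow f (k+1)).ker = (fpow f k).ker := by
    intro k hk
    induction k, hk using Nat.le_induction with
    | base => exact hk1
    | succ k hk ih => exact ker_step f ih
  refine ⟨i+1, Nat.succ_pos i, ?_⟩
  intro m hm
  induction m, hm using Nat.le_induction with
  | base => exact ⟨rfl, rfl⟩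
  | succ m hm ih =>
    exact ⟨(hrall m (by omega)).trans ih.1, (hkall m (by omega)).trans ih.2⟩


lemma stab_pack [Finite A] (f : A →* A) {n₀ n : ℕ} (hle : n₀ ≤ n)
    (hstab : ∀ m, n₀ ≤ m → (fpow f m).range = (fpow f n₀).range ∧
      (fpow f m).ker = (fpow f n₀).ker) :
    (∀ x, fpow f n x = 1 → x ∈ (fpow f n).range → x = 1) ∧
    (∀ a, ∃ x y, fpow f n x = 1 ∧ y ∈ (fpow f n).range ∧ a = x * y) ∧
    (fpow f (n+1)).range = (fpow f n).range := by
  have heq : ∀ m, n ≤ m → (fpow f m).range = (fpow f n).range ∧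
      (fpow f m).ker = (fpow f n).ker := by
    intro m hm
    obtain ⟨h1, h2⟩ := hstab m (le_trans hle hm)
    obtain ⟨h3, h4⟩ := hstab n hle
    exact ⟨h1.trans h3.symm, h2.trans h4.symm⟩
  refine ⟨?_, ?_, (heq (n+1) (by omega)).1⟩
  · rintro x hk ⟨y, rfl⟩
    have h2 : fpow f (n+n) y = 1 := by rw [fpow_add]; exact hk
    have h3 : y ∈ (fpow f n).ker := by
      rw [← (heq (n+n) (by omega)).2, MonoidHom.mem_ker]; exact h2
    rwa [MonoidHom.mem_ker] at h3
  · intro a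
    have h1 : fpow f n a ∈ (fpow f (n+n)).range := by
      rw [(heq (n+n) (by omega)).1]; exact ⟨a, rfl⟩
    obtain ⟨b, hb⟩ := h1
    refine ⟨a * (fpow f n b)⁻¹, fpow f n b, ?_, ⟨b, rfl⟩, by group⟩
    rw [map_mul, map_inv, ← fpow_add, hb, mul_inv_cancel]

lemma decomp_equiv {f : A →* A} (hf : ∀ a x, f (a * x * a⁻¹) = a * f x * a⁻¹)
    {n : ℕ}
    (hdisj : ∀ x, fpow f n x = 1 → x ∈ (fpow f n).range → x = 1)
    (hgen : ∀ a, ∃ x y, fpow f n x = 1 ∧ y ∈ (fpow f n).range ∧ a = x * y) :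
    Nonempty (A ≃* ↥(fpow f n).range × ↥(fpow f n).ker) := by
  have hcomm : ∀ (x : ↥(fpow f n).ker) (y : ↥(fpow f n).range),
      Commute ((fpow f n).ker.subtype x) ((fpow f n).range.subtype y) := by
    rintro ⟨x, hx⟩ ⟨y, hy⟩
    obtain ⟨z, hz⟩ := hy
    rw [MonoidHom.mem_ker] at hx
    show x * y = y * x
    have hc1 : fpow f n (x * y * x⁻¹ * y⁻¹) = 1 := by
      simp [map_mul, map_inv, hx]
    have hc2 : x * y * x⁻¹ * y⁻¹ ∈ (fpow f n).range := by
      refine ⟨(x * z * x⁻¹) * z⁻¹, ?_⟩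
      rw [map_mul, map_inv, fpow_norm hf n, hz]
    have hc := hdisj _ hc1 hc2
    have hc' : (x*y) * (y*x)⁻¹ = 1 := by
      rw [mul_inv_rev, ← mul_assoc]; exact hc
    exact mul_inv_eq_one.mp hc'
  let m := MonoidHom.noncommCoprod ((fpow f n).ker.subtype) ((fpow f n).range.subtype) hcomm
  have hminj : Function.Injective m := by
    rw [injective_iff_map_eq_one]
    rintro ⟨⟨x, hx⟩, ⟨y, hy⟩⟩ hxy
    rw [MonoidHom.mem_ker] at hx
    have hxy' : x * y = 1 := hxy
    have hyx : x = y⁻¹ := eq_inv_of_mul_eq_one_left hxy' 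
    have hx1 : x = 1 := hdisj x hx (hyx ▸ (fpow f n).range.inv_mem hy)
    have hy1 : y = 1 := by
      rw [hx1, one_mul] at hxy'; exact hxy'
    simp [Prod.ext_iff, Subtype.ext_iff, hx1, hy1]
  have hmsurj : Function.Surjective m := by
    intro a
    obtain ⟨x, y, hx, hy, rfl⟩ := hgen a
    exact ⟨(⟨x, MonoidHom.mem_ker.mpr hx⟩, ⟨y, hy⟩), rfl⟩
  exact ⟨(MulEquiv.ofBijective m ⟨hminj, hmsurj⟩).symm.trans
    (MulEquiv.prodComm)⟩


lemma key_inj {H K : Type} [Group H] [Group K] [Finite H] [Finite K]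
    (hno : ∀ (L : Type) [Group L], Nontrivial L →
      (∃ (H' : Type) (_ : Group H'), Nonempty (H ≃* L × H')) →
      (∃ (K' : Type) (_ : Group K'), Nonempty (K ≃* L × K')) → False)
    (φ : MulAut (H × K)) :
    ∀ h : H, (φ (h, 1)).1 = 1 → h = 1 := by
  intro h₀ hα0
  by_contra hne
  let α : H →* H := (MonoidHom.fst H K).comp (φ.toMonoidHom.comp (MonoidHom.inl H K))
  let γ : H →* K := (MonoidHom.snd H K).comp (φ.toMonoidHom.comp (MonoidHom.inl H K))
  let δ : K →* K := (MonoidHom.snd H K).comp (φ.toMonoidHom.comp (MonoidHom.inr H K))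
  let α' : H →* H := (MonoidHom.fst H K).comp (φ.symm.toMonoidHom.comp (MonoidHom.inl H K))
  let β' : K →* H := (MonoidHom.fst H K).comp (φ.symm.toMonoidHom.comp (MonoidHom.inr H K))
  let δ' : K →* K := (MonoidHom.snd H K).comp (φ.symm.toMonoidHom.comp (MonoidHom.inr H K))
  have hαd : ∀ x : H, α x = (φ (x, 1)).1 := fun _ => rfl
  have hγd : ∀ x : H, γ x = (φ (x, 1)).2 := fun _ => rfl
  have hδd : ∀ k : K, δ k = (φ (1, k)).2 := fun _ => rfl
  have hsplit : ∀ g : H × K, g = (g.1, (1:K)) * ((1:H), g.2) := by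
    intro g; simp
  have I1 : ∀ x : H, α' (α x) * β' (γ x) = x := by
    intro x
    have h1 : φ.symm (φ (x, 1)) = (x, 1) := φ.symm_apply_apply _
    have h2 : φ.symm (((φ (x,1)).1, (1:K))) * φ.symm (((1:H), (φ (x,1)).2)) = (x, 1) := by
      rw [← map_mul, ← hsplit (φ (x,1))]; exact h1
    have := congrArg Prod.fst h2
    exact this
  have I2 : ∀ (x : H) (k : K), Commute (α' x) (β' k) := by
    intro x k
    have h1 : ((x, (1:K)) : H × K) * (1, k) = ((1:H), k) * (x, 1) := by simp
    have h2 := congrArg Prod.fst (congrArg φ.symm h1)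
    rw [map_mul, map_mul] at h2
    exact h2
  have I3 : ∀ k : K, γ (β' k) * δ (δ' k) = k := by
    intro k
    have h1 : φ (φ.symm (1, k)) = ((1:H), k) := φ.apply_symm_apply _
    have h2 : φ (((φ.symm ((1:H),k)).1, (1:K))) * φ (((1:H), (φ.symm ((1:H),k)).2)) = ((1:H), k) := by
      rw [← map_mul, ← hsplit (φ.symm ((1:H),k))]; exact h1
    have := congrArg Prod.snd h2
    exact this
  have I4 : ∀ (x : H) (k : K), Commute (γ x) (δ k) := by
    intro x k
    have h1 : ((x, (1:K)) : H × K) * (1, k) = ((1:H), k) * (x, 1) := by simp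
    have h2 := congrArg Prod.snd (congrArg φ h1)
    rw [map_mul, map_mul] at h2
    exact h2
  let p : H →* H := β'.comp γ
  let q : K →* K := γ.comp β'
  have hpd : ∀ x, p x = β' (γ x) := fun _ => rfl
  have hqd : ∀ k, q k = γ (β' k) := fun _ => rfl
  have hp : ∀ a x, p (a * x * a⁻¹) = a * p x * a⁻¹ := by
    intro a x
    have hu : α' (α a) * β' (γ a * γ x * (γ a)⁻¹) * (α' (α a))⁻¹
        = β' (γ a * γ x * (γ a)⁻¹) := by
      rw [(I2 (α a) (γ a * γ x * (γ a)⁻¹)).eq, mul_inv_cancel_right]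
    calc p (a * x * a⁻¹) = β' (γ a * γ x * (γ a)⁻¹) := by
          simp [hpd, mul_assoc]
      _ = α' (α a) * β' (γ a * γ x * (γ a)⁻¹) * (α' (α a))⁻¹ := hu.symm
      _ = α' (α a) * (β' (γ a) * p x * (β' (γ a))⁻¹) * (α' (α a))⁻¹ := by
          simp [hpd, mul_assoc]
      _ = (α' (α a) * β' (γ a)) * p x * (α' (α a) * β' (γ a))⁻¹ := by group
      _ = a * p x * a⁻¹ := by rw [I1]
  have hq : ∀ a x, q (a * x * a⁻¹) = a * q x * a⁻¹ := by
    intro a x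
    have hu : δ (δ' a) * (γ (β' a) * q x * (γ (β' a))⁻¹) * (δ (δ' a))⁻¹
        = γ (β' a) * q x * (γ (β' a))⁻¹ := by
      have h2 : γ (β' a) * q x * (γ (β' a))⁻¹ = γ (β' a * β' x * (β' a)⁻¹) := by
        simp [hqd, mul_assoc]
      rw [h2, ← (I4 (β' a * β' x * (β' a)⁻¹) (δ' a)).eq, mul_inv_cancel_right]
    calc q (a * x * a⁻¹) = γ (β' a) * q x * (γ (β' a))⁻¹ := by
          simp [hqd, mul_assoc]
      _ = δ (δ' a) * (γ (β' a) * q x * (γ (β' a))⁻¹) * (δ (δ' a))⁻¹ := hu.symm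
      _ = (δ (δ' a) * γ (β' a)) * q x * (δ (δ' a) * γ (β' a))⁻¹ := by group
      _ = (γ (β' a) * δ (δ' a)) * q x * (γ (β' a) * δ (δ' a))⁻¹ := by
          rw [(I4 (β' a) (δ' a)).eq]
      _ = a * q x * a⁻¹ := by rw [I3]
  -- intertwining
  have hint : ∀ (m : ℕ) (x : H), γ (fpow p m x) = fpow q m (γ x) := by
    intro m
    induction m with
    | zero => intro x; rfl
    | succ m ih =>
      intro x
      rw [fpow_succ' p, fpow_succ' q, ← ih]
      have : γ (p (fpow p m x)) = q (γ (fpow p m x)) := rfl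
      rw [this]
  have hmix : ∀ (m : ℕ) (z : K), fpow q (m+1) z = γ (fpow p m (β' z)) := by
    intro m z
    rw [fpow_succ q, hint m (β' z)]
    rfl
  -- stabilization
  obtain ⟨np, hnp, hstabp⟩ := exists_stab p
  obtain ⟨nq, hnq, hstabq⟩ := exists_stab q
  set n := max np nq with hn
  obtain ⟨hdisjp, hgenp, hrstepp⟩ := stab_pack p (le_max_left np nq) hstabp
  obtain ⟨hdisjq, hgenq, hrstepq⟩ := stab_pack q (le_max_right np nq) hstabq
  have hn0 : 0 < n := lt_of_lt_of_le hnp (le_max_left _ _)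
  -- h₀ is a fixed point of p
  have hα0' : α h₀ = 1 := hα0
  have hp0 : p h₀ = h₀ := by
    have h1 := I1 h₀
    rw [hα0', map_one, one_mul] at h1
    exact h1
  have hfix : ∀ m, fpow p m h₀ = h₀ := by
    intro m
    induction m with
    | zero => rfl
    | succ m ih => rw [fpow_succ p, hp0, ih]
  have hmem₀ : h₀ ∈ (fpow p n).range := ⟨h₀, hfix n⟩
  -- the two decompositions
  obtain ⟨eH⟩ := decomp_equiv hp hdisjp hgenp
  obtain ⟨eK0⟩ := decomp_equiv hq hdisjq hgenq
  -- iso between the two ranges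
  have hmemg : ∀ x : ↥(fpow p n).range, (γ.comp (fpow p n).range.subtype) x ∈ (fpow q n).range := by
    rintro ⟨x, z, rfl⟩
    exact ⟨γ z, (hint n z).symm⟩
  let g1 : ↥(fpow p n).range →* ↥(fpow q n).range :=
    MonoidHom.codRestrict (γ.comp (fpow p n).range.subtype) _ hmemg
  have hg1inj : ∀ x : ↥(fpow p n).range, g1 x = 1 → x = 1 := by
    rintro ⟨x, hx⟩ hx1
    have hγx : γ x = 1 := congrArg Subtype.val hx1
    have hpx : p x = 1 := by rw [hpd, hγx, map_one]
    have hpnx : fpow p n x = 1 := by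
      obtain ⟨m, hm⟩ : ∃ m, n = m + 1 := ⟨n - 1, by omega⟩
      rw [hm, fpow_succ p, hpx, map_one]
    exact Subtype.ext (hdisjp x hpnx hx)
  have hg1surj : Function.Surjective g1 := by
    rintro ⟨y, hy⟩
    have hy' : y ∈ (fpow q (n+1)).range := by rw [hrstepq]; exact hy
    obtain ⟨z, hz⟩ := hy'
    refine ⟨⟨fpow p n (β' z), ⟨β' z, rfl⟩⟩, ?_⟩
    apply Subtype.ext
    show γ (fpow p n (β' z)) = y
    rw [← hmix n z, hz]
  let isoHK : ↥(fpow p n).range ≃* ↥(fpow q n).range :=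
    MulEquiv.ofBijective g1 ⟨(injective_iff_map_eq_one g1).mpr hg1inj, hg1surj⟩
  have hnt : Nontrivial ↥(fpow p n).range := by
    refine ⟨⟨h₀, hmem₀⟩, 1, ?_⟩
    simp only [ne_eq, Subtype.ext_iff]
    exact hne
  have eK : K ≃* ↥(fpow p n).range × ↥(fpow q n).ker :=
    eK0.trans (MulEquiv.prodCongr isoHK.symm (MulEquiv.refl _))
  exact hno (↥(fpow p n).range) hnt
    ⟨↥(fpow p n).ker, inferInstance, ⟨eH⟩⟩
    ⟨↥(fpow q n).ker, inferInstance, ⟨eK⟩⟩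
end BCM

/-- Bidwell–Curran–McCaughan: automorphisms of a direct product `H × K` of
finite groups with no common direct factor are described by matrices
`[[a, c], [b, d]]` with `a ∈ Aut H`, `d ∈ Aut K`, `b ∈ Hom(K, Z(H))`,
`c ∈ Hom(H, Z(K))`, acting by `(h, k) ↦ (h^a k^b, h^c k^d)`. -/
theorem aut_direct_product_matrices
    {H K : Type} [Group H] [Group K] [Finite H] [Finite K]
    (hno : ∀ (L : Type) [Group L], Nontrivial L →
      (∃ (H' : Type) (_ : Group H'), Nonempty (H ≃* L × H')) →
      (∃ (K' : Type) (_ : Group K'), Nonempty (K ≃* L × K')) → False) :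
    ∀ φ : MulAut (H × K),
      ∃! t : MulAut H × MulAut K × (K →* H) × (H →* K),
        (∀ k : K, t.2.2.1 k ∈ Subgroup.center H) ∧
        (∀ h : H, t.2.2.2 h ∈ Subgroup.center K) ∧
        (∀ (h : H) (k : K), φ (h, k) = (t.1 h * t.2.2.1 k, t.2.2.2 h * t.2.1 k)) := by
  intro φ
  let α : H →* H := (MonoidHom.fst H K).comp (φ.toMonoidHom.comp (MonoidHom.inl H K))
  let γ : H →* K := (MonoidHom.snd H K).comp (φ.toMonoidHom.comp (MonoidHom.inl H K))
  let β : K →* H := (MonoidHom.fst H K).comp (φ.toMonoidHom.comp (MonoidHom.inr H K))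
  let δ : K →* K := (MonoidHom.snd H K).comp (φ.toMonoidHom.comp (MonoidHom.inr H K))
  have hαd : ∀ x : H, α x = (φ (x, 1)).1 := fun _ => rfl
  have hγd : ∀ x : H, γ x = (φ (x, 1)).2 := fun _ => rfl
  have hβd : ∀ k : K, β k = (φ (1, k)).1 := fun _ => rfl
  have hδd : ∀ k : K, δ k = (φ (1, k)).2 := fun _ => rfl
  -- injectivity of α
  have hinjα : ∀ x : H, α x = 1 → x = 1 := fun x hx => BCM.key_inj hno φ x hx
  -- injectivity of δ via the swapped automorphism
  have hno' : ∀ (L : Type) [Group L], Nontrivial L →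
      (∃ (K' : Type) (_ : Group K'), Nonempty (K ≃* L × K')) →
      (∃ (H' : Type) (_ : Group H'), Nonempty (H ≃* L × H')) → False :=
    fun L inst hnt hKex hHex => @hno L inst hnt hHex hKex
  let σ : (H × K) ≃* (K × H) := MulEquiv.prodComm
  let φ' : MulAut (K × H) := σ.symm.trans (φ.trans σ)
  have hinjδ : ∀ k : K, δ k = 1 → k = 1 := by
    intro k hk
    refine BCM.key_inj hno' φ' k ?_
    show (σ (φ (σ.symm (k, 1)))).1 = 1
    have h1 : σ.symm ((k, (1:H))) = ((1:H), k) := rfl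
    rw [h1]
    exact hk
  -- formula
  have hform : ∀ (h : H) (k : K), φ (h, k) = (α h * β k, γ h * δ k) := by
    intro h k
    have h1 : ((h, k) : H × K) = (h, 1) * (1, k) := by simp
    rw [h1, map_mul]
    rfl
  -- centrality of γ
  have hγc : ∀ x : H, γ x ∈ Subgroup.center K := by
    intro x
    rw [Subgroup.mem_center_iff]
    intro k
    have hg : φ (φ.symm ((1:H), k)) = ((1:H), k) := φ.apply_symm_apply _
    set g : H × K := φ.symm ((1:H), k) with hgdef
    have hcomm : φ ((x, (1:K)) * g * ((x, (1:K)))⁻¹ * g⁻¹)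
        = φ (x, (1:K)) * ((1:H), k) * (φ (x, (1:K)))⁻¹ * ((1:H), k)⁻¹ := by
      simp only [map_mul, map_inv]
      rw [hg]
    have harg : ((x, (1:K))) * g * ((x, (1:K)))⁻¹ * g⁻¹
        = ((x * g.1 * x⁻¹ * g.1⁻¹, (1:K)) : H × K) := by
      ext
      · simp
      · simp
    rw [harg] at hcomm
    have h1 : α (x * g.1 * x⁻¹ * g.1⁻¹) = 1 := by
      have := congrArg Prod.fst hcomm
      simp only [Prod.fst_mul, Prod.fst_inv] at this
      rw [hαd]
      rw [this]
      simp
    have hw : x * g.1 * x⁻¹ * g.1⁻¹ = 1 := hinjα _ h1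
    rw [hw] at hcomm
    have hone : φ (((1:H), (1:K)) : H × K) = 1 := map_one φ
    rw [hone] at hcomm
    have h2 := congrArg Prod.snd hcomm
    simp only [Prod.snd_mul, Prod.snd_inv, Prod.snd_one] at h2
    -- h2 : 1 = (φ (x,1)).2 * k * ((φ (x,1)).2)⁻¹ * k⁻¹
    rw [hγd]
    have h3 : (φ (x, (1:K))).2 * k * ((φ (x, (1:K))).2)⁻¹ * k⁻¹ = 1 := h2.symm
    have h4 : (φ (x, (1:K))).2 * k = k * (φ (x, (1:K))).2 := by
      have : ((φ (x, (1:K))).2 * k) * (k * (φ (x, (1:K))).2)⁻¹ = 1 := by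
        rw [mul_inv_rev, ← mul_assoc]; exact h3
      exact mul_inv_eq_one.mp this
    exact h4.symm
  -- centrality of β
  have hβc : ∀ k : K, β k ∈ Subgroup.center H := by
    intro k
    rw [Subgroup.mem_center_iff]
    intro h
    have hg : φ (φ.symm (h, (1:K))) = (h, (1:K)) := φ.apply_symm_apply _
    set g : H × K := φ.symm (h, (1:K)) with hgdef
    have hcomm : φ (((1:H), k) * g * (((1:H), k))⁻¹ * g⁻¹)
        = φ ((1:H), k) * (h, (1:K)) * (φ ((1:H), k))⁻¹ * (h, (1:K))⁻¹ := by
      simp only [map_mul, map_inv]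
      rw [hg]
    have harg : (((1:H), k)) * g * (((1:H), k))⁻¹ * g⁻¹
        = (((1:H), k * g.2 * k⁻¹ * g.2⁻¹) : H × K) := by
      ext
      · simp
      · simp
    rw [harg] at hcomm
    have h1 : δ (k * g.2 * k⁻¹ * g.2⁻¹) = 1 := by
      have := congrArg Prod.snd hcomm
      simp only [Prod.snd_mul, Prod.snd_inv] at this
      rw [hδd]
      rw [this]
      simp
    have hw : k * g.2 * k⁻¹ * g.2⁻¹ = 1 := hinjδ _ h1
    rw [hw] at hcomm
    have hone : φ (((1:H), (1:K)) : H × K) = 1 := map_one φ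
    rw [hone] at hcomm
    have h2 := congrArg Prod.fst hcomm
    simp only [Prod.fst_mul, Prod.fst_inv, Prod.fst_one] at h2
    rw [hβd]
    have h3 : (φ ((1:H), k)).1 * h * ((φ ((1:H), k)).1)⁻¹ * h⁻¹ = 1 := h2.symm
    have h4 : (φ ((1:H), k)).1 * h = h * (φ ((1:H), k)).1 := by
      have : ((φ ((1:H), k)).1 * h) * (h * (φ ((1:H), k)).1)⁻¹ = 1 := by
        rw [mul_inv_rev, ← mul_assoc]; exact h3
      exact mul_inv_eq_one.mp this
    exact h4.symm
  -- bijectivity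
  have hbijα : Function.Bijective α :=
    Finite.injective_iff_bijective.mp ((injective_iff_map_eq_one α).mpr hinjα)
  have hbijδ : Function.Bijective δ :=
    Finite.injective_iff_bijective.mp ((injective_iff_map_eq_one δ).mpr hinjδ)
  let A : MulAut H := MulEquiv.ofBijective α hbijα
  let D : MulAut K := MulEquiv.ofBijective δ hbijδ
  have hA : ∀ x, A x = α x := fun _ => rfl
  have hD : ∀ k, D k = δ k := fun _ => rfl
  refine ⟨(A, D, β, γ), ⟨hβc, hγc, ?_⟩, ?_⟩
  · intro h k
    rw [hform h k]
    rfl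
  · rintro ⟨a', d', b', c'⟩ ⟨hb'c, hc'c, hform'⟩
    have ha' : ∀ x : H, a' x = α x := by
      intro x
      have h1 := hform' x 1
      rw [map_one, map_one, mul_one, mul_one] at h1
      have := congrArg Prod.fst h1
      rw [hαd]
      rw [this]
    have hc' : ∀ x : H, c' x = γ x := by
      intro x
      have h1 := hform' x 1
      rw [map_one, map_one, mul_one, mul_one] at h1
      have := congrArg Prod.snd h1
      rw [hγd, this]
    have hb' : ∀ k : K, b' k = β k := by
      intro k
      have h1 := hform' 1 k
      rw [map_one, map_one, one_mul, one_mul] at h1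
      have := congrArg Prod.fst h1
      rw [hβd, this]
    have hd' : ∀ k : K, d' k = δ k := by
      intro k
      have h1 := hform' 1 k
      rw [map_one, map_one, one_mul, one_mul] at h1
      have := congrArg Prod.snd h1
      rw [hδd, this]
    have e1 : a' = A := by
      apply MulEquiv.ext; intro x; rw [ha' x, hA x]
    have e2 : d' = D := by
      apply MulEquiv.ext; intro k; rw [hd' k, hD k]
    have e3 : b' = β := MonoidHom.ext hb'
    have e4 : c' = γ := MonoidHom.ext hc'
    rw [e1, e2, e3, e4]
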